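/- Let n ≥ 1, k ≥ 1 be natural numbers, let ε ≥ 0, and let f : ℝ^n → ℝ be continuously differentiable with support contained in [-1,1]^n. Suppose that for each integer vector i ∈ Z_k^n a function A_i : ℝ^n → ℝ satisfies |A_i(x) - g_n(k·x - i)| ≤ ε for all x ∈ [0,1]^n. Then for all x ∈ [0,1]^n, |f(x) - Σ_{i ∈ Z_k^n} f(i/k) · A_i(x)| ≤ (max_{j=1,…,n} ‖∂_{x_j} f‖_∞) · n/(2k) + ‖f‖_∞ · (2k+1)^n · ε, where ‖f‖_∞ = sup{|f(x)| : x ∈ ℝ^n}. -/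

import Mathlib

/-- The tent function `g₁(x) = max{1 - |x|, 0}`. -/
noncomputable def g1 (x : ℝ) : ℝ := max (1 - |x|) 0

/-- The product tent function `gₙ(x) = ∏ⱼ g₁(xⱼ)`. -/
noncomputable def gn {n : ℕ} (x : Fin n → ℝ) : ℝ := ∏ j, g1 (x j)

lemma g1_nonneg (x : ℝ) : 0 ≤ g1 x := le_max_right _ _

lemma g1_zero {x : ℝ} (h : 1 ≤ |x|) : g1 x = 0 :=
  max_eq_right (by linarith)

lemma g1_eval {x : ℝ} (h0 : 0 ≤ x) (h1 : x ≤ 1) : g1 x = 1 - x := by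
  rw [g1, abs_of_nonneg h0]; exact max_eq_left (by linarith)

lemma sum_reduce (k : ℕ) (hk : 1 ≤ k) (t : ℝ) (ht0 : 0 ≤ t) (htk : t ≤ k)
    (φ : ℝ → ℝ) (hφ : ∀ s, 1 ≤ |s| → φ s = 0) :
    ∃ s : ℝ, 0 ≤ s ∧ s ≤ 1 ∧
      ∑ i ∈ Finset.Icc (-(k : ℤ)) k, φ (t - i) = φ s + φ (s - 1) := by
  set m : ℤ := min ⌊t⌋ (k - 1) with hm
  have hk1 : (1 : ℤ) ≤ k := by exact_mod_cast hk
  have hm0 : 0 ≤ m := le_min (Int.le_floor.mpr (by exact_mod_cast ht0)) (by omega)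
  have hmk : m + 1 ≤ k := by omega
  have hms : (m : ℝ) ≤ t := le_trans (by exact_mod_cast min_le_left _ _) (Int.floor_le t)
  have hts : t ≤ (m : ℝ) + 1 := by
    rcases le_or_gt ⌊t⌋ (k - 1) with h | h
    · have : m = ⌊t⌋ := min_eq_left h
      rw [this]; exact le_of_lt (Int.lt_floor_add_one t)
    · have : m = (k : ℤ) - 1 := min_eq_right (le_of_lt h)
      rw [this]; push_cast; linarith
  refine ⟨t - m, by linarith, by linarith, ?_⟩
  have hsub : ({m, m + 1} : Finset ℤ) ⊆ Finset.Icc (-(k : ℤ)) k := by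
    intro i hi
    simp only [Finset.mem_insert, Finset.mem_singleton] at hi
    rcases hi with rfl | rfl <;> simp [Finset.mem_Icc] <;> omega
  rw [← Finset.sum_subset hsub]
  · rw [Finset.sum_pair (by omega : m ≠ m + 1)]
    push_cast
    ring_nf
  · intro i hi hni
    simp only [Finset.mem_insert, Finset.mem_singleton] at hni
    push_neg at hni
    apply hφ
    rcases lt_or_ge i m with h | h
    · have : (i : ℝ) ≤ (m : ℝ) - 1 := by exact_mod_cast (by omega : i ≤ m - 1)
      rw [abs_of_nonneg (by linarith)]; linarith
    · have : (m : ℝ) + 2 ≤ i := by exact_mod_cast (by omega : m + 2 ≤ i)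
      rw [abs_of_nonpos (by linarith)]; linarith

lemma g1_eval' {s : ℝ} (h0 : 0 ≤ s) (h1 : s ≤ 1) : g1 (s - 1) = s := by
  rw [g1, abs_of_nonpos (by linarith)]
  have : 1 - -(s - 1) = s := by ring
  rw [this]; exact max_eq_left h0

lemma sum_g1 (k : ℕ) (hk : 1 ≤ k) (t : ℝ) (ht0 : 0 ≤ t) (htk : t ≤ k) :
    ∑ i ∈ Finset.Icc (-(k : ℤ)) k, g1 (t - i) = 1 := by
  obtain ⟨s, hs0, hs1, h⟩ := sum_reduce k hk t ht0 htk g1 (fun s hs => g1_zero hs)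
  rw [h, g1_eval hs0 hs1, g1_eval' hs0 hs1]; ring

lemma sum_g1w (k : ℕ) (hk : 1 ≤ k) (t : ℝ) (ht0 : 0 ≤ t) (htk : t ≤ k) :
    ∑ i ∈ Finset.Icc (-(k : ℤ)) k, g1 (t - i) * |t - i| ≤ 1 / 2 := by
  obtain ⟨s, hs0, hs1, h⟩ := sum_reduce k hk t ht0 htk (fun u => g1 u * |u|)
    (fun s hs => by simp [g1_zero hs])
  rw [h]; beta_reduce
  simp only [g1_eval hs0 hs1, g1_eval' hs0 hs1, abs_of_nonneg hs0,
    abs_of_nonpos (by linarith : s - 1 ≤ 0)]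
  nlinarith [sq_nonneg (2 * s - 1)]

lemma gn_nonneg {n : ℕ} (x : Fin n → ℝ) : 0 ≤ gn x :=
  Finset.prod_nonneg fun _ _ => g1_nonneg _

variable {n k : ℕ}

lemma txj (hk : 1 ≤ k) {x : Fin n → ℝ}
    (hx : x ∈ Set.Icc (fun _ => (0 : ℝ)) (fun _ => 1)) (j : Fin n) :
    0 ≤ (k : ℝ) * x j ∧ (k : ℝ) * x j ≤ k := by
  have hkpos : (0 : ℝ) < k := Nat.cast_pos.mpr hk
  have h1 := hx.1 j
  have h2 := hx.2 j
  simp only at h1 h2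
  constructor
  · positivity
  · nlinarith

lemma sum_gn (hk : 1 ≤ k) (x : Fin n → ℝ)
    (hx : x ∈ Set.Icc (fun _ => (0 : ℝ)) (fun _ => 1)) :
    ∑ i ∈ Fintype.piFinset (fun _ : Fin n => Finset.Icc (-(k : ℤ)) k),
      gn (fun j => k * x j - i j) = 1 := by
  simp only [gn]
  rw [← Finset.prod_univ_sum (fun _ : Fin n => Finset.Icc (-(k : ℤ)) k)
    (fun j' (m : ℤ) => g1 (k * x j' - m))]
  rw [Finset.prod_eq_one]
  intro j _
  exact sum_g1 k hk (k * x j) (txj hk hx j).1 (txj hk hx j).2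

lemma sum_gnw (hk : 1 ≤ k) (x : Fin n → ℝ)
    (hx : x ∈ Set.Icc (fun _ => (0 : ℝ)) (fun _ => 1)) (j : Fin n) :
    ∑ i ∈ Fintype.piFinset (fun _ : Fin n => Finset.Icc (-(k : ℤ)) k),
      gn (fun j' => k * x j' - i j') * |x j - i j / k| ≤ 1 / (2 * k) := by
  have hkpos : (0 : ℝ) < k := Nat.cast_pos.mpr hk
  have step : ∀ i : Fin n → ℤ,
      gn (fun j' => k * x j' - i j') * |x j - i j / k|
        = ∏ j', (if j' = j then g1 (k * x j' - i j') * |x j' - i j' / k|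
                 else g1 (k * x j' - i j')) := by
    intro i
    calc gn (fun j' => k * x j' - i j') * |x j - i j / k|
        = (∏ j' ∈ Finset.univ.erase j, g1 (k * x j' - i j'))
            * (g1 (k * x j - i j) * |x j - i j / k|) := by
          rw [gn, ← Finset.prod_erase_mul Finset.univ _ (Finset.mem_univ j)]; ring
      _ = _ := by
          rw [← Finset.prod_erase_mul Finset.univ _ (Finset.mem_univ j)]
          congr 1
          · exact Finset.prod_congr rfl fun j' hj' => by
              rw [if_neg (Finset.ne_of_mem_erase hj')]
          · rw [if_pos rfl]
  simp only [step]
  rw [← Finset.prod_univ_sum (fun _ : Fin n => Finset.Icc (-(k : ℤ)) k)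
    (fun j' (m : ℤ) => if j' = j then g1 (k * x j' - m) * |x j' - m / k|
      else g1 (k * x j' - m))]
  rw [← Finset.prod_erase_mul Finset.univ _ (Finset.mem_univ j)]
  have herase : (∏ j' ∈ Finset.univ.erase j,
      ∑ i ∈ Finset.Icc (-(k : ℤ)) k,
        (if j' = j then g1 (k * x j' - i) * |x j' - i / k|
         else g1 (k * x j' - i))) = 1 := by
    apply Finset.prod_eq_one
    intro j' hj'
    simp only [if_neg (Finset.ne_of_mem_erase hj')]
    exact sum_g1 k hk (k * x j') (txj hk hx j').1 (txj hk hx j').2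
  rw [herase, one_mul]
  simp only [if_pos rfl]
  have habs : ∀ i : ℤ, |x j - i / k| = |k * x j - i| / k := by
    intro i
    rw [← abs_of_pos hkpos, ← abs_div]
    congr 1
    simp only [abs_of_pos hkpos]; field_simp
  calc ∑ i ∈ Finset.Icc (-(k : ℤ)) k, g1 (k * x j - i) * |x j - i / k|
      = (∑ i ∈ Finset.Icc (-(k : ℤ)) k, g1 (k * x j - i) * |k * x j - i|) / k := by
        rw [Finset.sum_div]
        exact Finset.sum_congr rfl fun i _ => by rw [habs i]; ring
    _ ≤ (1 / 2) / k := by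
        gcongr
        exact sum_g1w k hk (k * x j) (txj hk hx j).1 (txj hk hx j).2
    _ = 1 / (2 * k) := by rw [div_div]

lemma lip {n : ℕ} (f : (Fin n → ℝ) → ℝ) (hf : ContDiff ℝ 1 f) (C : ℝ)
    (hC : ∀ (j : Fin n) (x : Fin n → ℝ), |fderiv ℝ f x (Pi.single j 1)| ≤ C)
    (x y : Fin n → ℝ) : |f y - f x| ≤ C * ∑ j, |y j - x j| := by
  have hdf : Differentiable ℝ f := hf.differentiable (by norm_num)
  set γ : ℝ → (Fin n → ℝ) := fun t => x + t • (y - x) with hγ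
  have hγd : ∀ t : ℝ, HasDerivAt γ (y - x) t := by
    intro t
    exact ((by simpa using (hasDerivAt_id t).smul_const (y - x)) :
      HasDerivAt (fun s : ℝ => s • (y - x)) (y - x) t).const_add x
  have hud : ∀ t : ℝ, HasDerivAt (f ∘ γ) (fderiv ℝ f (γ t) (y - x)) t := fun t =>
    (hdf (γ t)).hasFDerivAt.comp_hasDerivAt t (hγd t)
  have hbound : ∀ z : Fin n → ℝ, |fderiv ℝ f z (y - x)| ≤ C * ∑ j, |y j - x j| := by
    intro z
    have hyx : (y - x) = ∑ j, (y j - x j) • (Pi.single j 1 : Fin n → ℝ) := by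
      funext j'
      simp [Finset.sum_apply, Pi.single_apply, Finset.sum_ite_eq']
    rw [hyx, map_sum]
    simp only [map_smul, smul_eq_mul]
    calc |∑ j, (y j - x j) * fderiv ℝ f z (Pi.single j 1)|
        ≤ ∑ j, |(y j - x j) * fderiv ℝ f z (Pi.single j 1)| := Finset.abs_sum_le_sum_abs _ _
      _ ≤ ∑ j, |y j - x j| * C := by
          apply Finset.sum_le_sum
          intro j _
          rw [abs_mul]
          exact mul_le_mul_of_nonneg_left (hC j z) (abs_nonneg _)
      _ = C * ∑ j, |y j - x j| := by rw [← Finset.sum_mul, mul_comm]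
  have key := norm_image_sub_le_of_norm_deriv_le_segment'
    (f := f ∘ γ) (f' := fun t => fderiv ℝ f (γ t) (y - x))
    (a := 0) (b := 1) (C := C * ∑ j, |y j - x j|)
    (fun t _ => (hud t).hasDerivWithinAt)
    (fun t _ => hbound (γ t)) 1 (by norm_num)
  simpa [hγ] using key

/-- **Error chaining in the proof of Theorem 2.** If `f ∈ C¹(ℝⁿ)` is supported in
`[-1,1]ⁿ`, `B` bounds `|f|` on `ℝⁿ` (best such: `‖f‖_∞`), `C` bounds all partial
derivatives (best such: `max_j ‖∂ⱼf‖_∞`), and each `A_i` approximates `gₙ(kx - i)`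
uniformly on `[0,1]ⁿ` within `ε`, then on `[0,1]ⁿ`,
`|f(x) - ∑_{i ∈ Z_kⁿ} f(i/k) A_i(x)| ≤ C·n/(2k) + B·(2k+1)ⁿ·ε`. -/
theorem error_chaining (n k : ℕ) (hn : 1 ≤ n) (hk : 1 ≤ k)
    (ε : ℝ) (hε : 0 ≤ ε)
    (f : (Fin n → ℝ) → ℝ) (hf : ContDiff ℝ 1 f)
    (hsupp : Function.support f ⊆ Set.Icc (fun _ => (-1 : ℝ)) (fun _ => 1))
    (A : (Fin n → ℤ) → (Fin n → ℝ) → ℝ)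
    (hA : ∀ i ∈ Fintype.piFinset (fun _ : Fin n => Finset.Icc (-(k : ℤ)) k),
      ∀ x ∈ Set.Icc (fun _ => (0 : ℝ)) (fun _ => 1),
        |A i x - gn (fun j => k * x j - i j)| ≤ ε)
    (B C : ℝ)
    (hB : ∀ x : Fin n → ℝ, |f x| ≤ B)
    (hC : ∀ (j : Fin n) (x : Fin n → ℝ), |fderiv ℝ f x (Pi.single j 1)| ≤ C) :
    ∀ x ∈ Set.Icc (fun _ => (0 : ℝ)) (fun _ => 1),
      |f x - ∑ i ∈ Fintype.piFinset (fun _ : Fin n => Finset.Icc (-(k : ℤ)) k),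
          f (fun j => (i j : ℝ) / k) * A i x|
        ≤ C * n / (2 * k) + B * (2 * k + 1) ^ n * ε := by
  intro x hx
  have hkpos : (0 : ℝ) < k := Nat.cast_pos.mpr hk
  have hC0 : 0 ≤ C := le_trans (abs_nonneg _) (hC ⟨0, hn⟩ x)
  have hB0 : 0 ≤ B := le_trans (abs_nonneg _) (hB x)
  set S := Fintype.piFinset (fun _ : Fin n => Finset.Icc (-(k : ℤ)) k) with hS
  have hsum1 := sum_gn hk x hx
  have hdecomp : f x - ∑ i ∈ S, f (fun j => (i j : ℝ) / k) * A i x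
      = (∑ i ∈ S, (f x - f (fun j => (i j : ℝ) / k)) * gn (fun j => k * x j - i j))
        + ∑ i ∈ S, f (fun j => (i j : ℝ) / k) * (gn (fun j => k * x j - i j) - A i x) := by
    rw [← Finset.sum_add_distrib]
    have : ∀ i ∈ S,
        (f x - f (fun j => (i j : ℝ) / k)) * gn (fun j => k * x j - i j)
          + f (fun j => (i j : ℝ) / k) * (gn (fun j => k * x j - i j) - A i x)
        = f x * gn (fun j => k * x j - i j) - f (fun j => (i j : ℝ) / k) * A i x :=
      fun i _ => by ring
    rw [Finset.sum_congr rfl this, Finset.sum_sub_distrib, ← Finset.mul_sum, hsum1, mul_one]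
  have h1 : |∑ i ∈ S, (f x - f (fun j => (i j : ℝ) / k)) * gn (fun j => k * x j - i j)|
      ≤ C * n / (2 * k) := by
    calc |∑ i ∈ S, (f x - f (fun j => (i j : ℝ) / k)) * gn (fun j => k * x j - i j)|
        ≤ ∑ i ∈ S, |(f x - f (fun j => (i j : ℝ) / k)) * gn (fun j => k * x j - i j)| :=
          Finset.abs_sum_le_sum_abs _ _
      _ ≤ ∑ i ∈ S, (C * ∑ j, |x j - i j / k|) * gn (fun j => k * x j - i j) := by
          apply Finset.sum_le_sum
          intro i _
          rw [abs_mul, abs_of_nonneg (gn_nonneg _)]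
          apply mul_le_mul_of_nonneg_right _ (gn_nonneg _)
          have := lip f hf C hC (fun j => (i j : ℝ) / k) x
          simpa [abs_sub_comm] using this
      _ = C * ∑ j, ∑ i ∈ S, gn (fun j' => k * x j' - i j') * |x j - i j / k| := by
          simp only [mul_assoc]
          rw [← Finset.mul_sum]
          congr 1
          rw [Finset.sum_comm]
          refine Finset.sum_congr rfl fun i _ => ?_
          rw [Finset.sum_mul]
          exact Finset.sum_congr rfl fun j _ => mul_comm _ _
      _ ≤ C * ∑ _j : Fin n, 1 / (2 * (k : ℝ)) := by
          apply mul_le_mul_of_nonneg_left _ hC0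
          exact Finset.sum_le_sum fun j _ => sum_gnw hk x hx j
      _ = C * n / (2 * k) := by
          rw [Finset.sum_const, Finset.card_univ, Fintype.card_fin, nsmul_eq_mul]
          push_cast
          field_simp
  have hcard : (S.card : ℝ) = (2 * (k : ℝ) + 1) ^ n := by
    rw [hS, Fintype.card_piFinset]
    simp only [Int.card_Icc]
    rw [Finset.prod_const, Finset.card_univ, Fintype.card_fin]
    have : ((k : ℤ) + 1 - -(k : ℤ)).toNat = 2 * k + 1 := by omega
    rw [this]
    push_cast
    ring
  have h2 : |∑ i ∈ S, f (fun j => (i j : ℝ) / k) * (gn (fun j => k * x j - i j) - A i x)|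
      ≤ B * (2 * (k : ℝ) + 1) ^ n * ε := by
    calc |∑ i ∈ S, f (fun j => (i j : ℝ) / k) * (gn (fun j => k * x j - i j) - A i x)|
        ≤ ∑ i ∈ S, |f (fun j => (i j : ℝ) / k) * (gn (fun j => k * x j - i j) - A i x)| :=
          Finset.abs_sum_le_sum_abs _ _
      _ ≤ ∑ _i ∈ S, B * ε := by
          apply Finset.sum_le_sum
          intro i hi
          rw [abs_mul]
          apply mul_le_mul (hB _) _ (abs_nonneg _) hB0
          rw [abs_sub_comm]
          exact hA i hi x hx
      _ = B * (2 * (k : ℝ) + 1) ^ n * ε := by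
          rw [Finset.sum_const, nsmul_eq_mul, hcard]; ring
  calc |f x - ∑ i ∈ S, f (fun j => (i j : ℝ) / k) * A i x|
      ≤ _ + _ := by rw [hdecomp]; exact abs_add_le _ _
    _ ≤ C * n / (2 * k) + B * (2 * k + 1) ^ n * ε := add_le_add h1 h2
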